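/- Let p > −1/2, let P be a real 2×2 matrix, ψ ∈ ℝ, and let (A,B) = Ξₚ(P,ψ). For a > 0 set (A(a,z),B(a,z)) := (aᵖ·A(az), aᵖ·B(az))·𝒟_ψ(a)⁻¹. Then, as a → 0⁺, A(a,·) converges to the constant function 1 and B(a,·) converges to the constant function 0, uniformly on every compact subset of ℂ. -/

import Mathlib

open Matrix MeasureTheory Filter

noncomputable section

def matJ : Matrix (Fin 2) (Fin 2) ℝ := !![0, -1; 1, 0]

def Dpsi (p ψ a : ℝ) : Matrix (Fin 2) (Fin 2) ℝ :=
  if p = 0 then !![1, 0; ψ * Real.log a, 1]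
  else !![1, 0; ψ / (2 * p), 1] * !![a ^ p, 0; 0, a ^ (-p)] * !![1, 0; -ψ / (2 * p), 1]

def HPpsi (p ψ : ℝ) (P : Matrix (Fin 2) (Fin 2) ℝ) (a : ℝ) : Matrix (Fin 2) (Fin 2) ℝ :=
  Dpsi p ψ a * P * (Dpsi p ψ a)ᵀ

def SatRec (p : ℝ) (P : Matrix (Fin 2) (Fin 2) ℝ) (ψ : ℝ) (α β : ℕ → ℝ) : Prop :=
  α 0 = 1 ∧ β 0 = 0 ∧ ∀ n : ℕ,
    !![α (n + 1), β (n + 1)] =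
      (-1 / (((n : ℝ) + 1) * (2 * p + (n : ℝ) + 1))) •
        (!![α n, β n] * (P * matJ * !![2 * p + (n : ℝ) + 1, 0; ψ, (n : ℝ) + 1]))

def genF (c : ℕ → ℝ) (z : ℂ) : ℂ := ∑' n : ℕ, (c n : ℂ) * z ^ n

def rowAB (p ψ : ℝ) (α β : ℕ → ℝ) (a : ℝ) (z : ℂ) : Matrix (Fin 1) (Fin 2) ℂ :=
  !![((a ^ p : ℝ) : ℂ) * genF α ((a : ℂ) * z), ((a ^ p : ℝ) : ℂ) * genF β ((a : ℂ) * z)] *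
    ((Dpsi p ψ a)⁻¹).map Complex.ofReal

/-! ### Auxiliary lemmas -/

set_option maxHeartbeats 1600000 in
lemma coeff_bound (p : ℝ) (hp : -(1/2 : ℝ) < p)
    (P : Matrix (Fin 2) (Fin 2) ℝ) (ψ : ℝ) (α β : ℕ → ℝ)
    (hrec : SatRec p P ψ α β) :
    ∃ M : ℝ, 1 ≤ M ∧ ∀ n, |α n| ≤ M ^ n ∧ |β n| ≤ M ^ n := by
  obtain ⟨t, ht⟩ : ∃ t : ℝ, t = 2 * p + 1 := ⟨_, rfl⟩
  have ht0 : 0 < t := by rw [ht]; linarith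
  obtain ⟨E, hE⟩ : ∃ E : ℝ, E = |P 0 0| + |P 0 1| + |P 1 0| + |P 1 1| := ⟨_, rfl⟩
  have hE0 : 0 ≤ E := by rw [hE]; positivity
  obtain ⟨M, hM⟩ : ∃ M : ℝ, M = 1 + 2 * (1 + |ψ| / t + 1 / t) * E := ⟨_, rfl⟩
  have hM1 : 1 ≤ M := by
    have h1 : 0 ≤ 2 * (1 + |ψ| / t + 1 / t) * E := by positivity
    linarith
  have hM0 : (0:ℝ) ≤ M := by linarith
  refine ⟨M, hM1, ?_⟩
  intro n
  induction n with
  | zero => simp [hrec.1, hrec.2.1]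
  | succ n ih =>
    have h0 := congrFun (congrFun (hrec.2.2 n) 0) 0
    have h1 := congrFun (congrFun (hrec.2.2 n) 0) 1
    simp [Matrix.mul_apply, Matrix.vecMul, dotProduct, Fin.sum_univ_two, matJ] at h0 h1
    have hm : (1:ℝ) ≤ (n:ℝ) + 1 := by
      have := Nat.cast_nonneg (α := ℝ) n; linarith
    have hm0 : (0:ℝ) < (n:ℝ) + 1 := by linarith
    have hc : t ≤ 2 * p + (n:ℝ) + 1 := by
      have := Nat.cast_nonneg (α := ℝ) n; rw [ht]; linarith
    have hc0 : (0:ℝ) < 2 * p + (n:ℝ) + 1 := lt_of_lt_of_le ht0 hc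
    have hmc : t ≤ ((n:ℝ) + 1) * (2 * p + (n:ℝ) + 1) := by nlinarith
    have hpn : (0:ℝ) ≤ M ^ n := pow_nonneg hM0 n
    have hnum1 : |α n * P 0 0 + β n * P 1 0| ≤ M ^ n * E := by
      calc |α n * P 0 0 + β n * P 1 0| ≤ |α n| * |P 0 0| + |β n| * |P 1 0| := by
            refine (abs_add_le _ _).trans ?_
            rw [abs_mul, abs_mul]
        _ ≤ M ^ n * E := by
            rw [hE]
            nlinarith [mul_le_mul_of_nonneg_right ih.1 (abs_nonneg (P 0 0)),
              mul_le_mul_of_nonneg_right ih.2 (abs_nonneg (P 1 0)),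
              abs_nonneg (P 0 1), abs_nonneg (P 1 1)]
    have hnum2 : |α n * P 0 1 + β n * P 1 1| ≤ M ^ n * E := by
      calc |α n * P 0 1 + β n * P 1 1| ≤ |α n| * |P 0 1| + |β n| * |P 1 1| := by
            refine (abs_add_le _ _).trans ?_
            rw [abs_mul, abs_mul]
        _ ≤ M ^ n * E := by
            rw [hE]
            nlinarith [mul_le_mul_of_nonneg_right ih.1 (abs_nonneg (P 0 1)),
              mul_le_mul_of_nonneg_right ih.2 (abs_nonneg (P 1 1)),
              abs_nonneg (P 0 0), abs_nonneg (P 1 0)]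
    constructor
    · have e0 : α (n+1) = -(α n * P 0 1 + β n * P 1 1) / ((n:ℝ)+1)
          + ψ * (α n * P 0 0 + β n * P 1 0) / (((n:ℝ)+1) * (2*p+(n:ℝ)+1)) := by
        rw [h0]; field_simp; ring
      have b1 : |(-(α n * P 0 1 + β n * P 1 1)) / ((n:ℝ)+1)| ≤ M ^ n * E := by
        rw [abs_div, abs_neg, abs_of_pos hm0]
        calc |α n * P 0 1 + β n * P 1 1| / ((n:ℝ)+1) ≤ |α n * P 0 1 + β n * P 1 1| / 1 := by
              gcongr
              all_goals first | exact abs_nonneg _ | exact hm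
          _ = |α n * P 0 1 + β n * P 1 1| := div_one _
          _ ≤ M ^ n * E := hnum2
      have b2 : |ψ * (α n * P 0 0 + β n * P 1 0) / (((n:ℝ)+1) * (2*p+(n:ℝ)+1))|
          ≤ |ψ| * (M ^ n * E) / t := by
        rw [abs_div, abs_mul, abs_of_pos (by positivity : (0:ℝ) < ((n:ℝ)+1) * (2*p+(n:ℝ)+1))]
        gcongr
        all_goals first | positivity | exact hnum1 | exact hmc
      have key : E + |ψ| * E / t ≤ M := by
        have h2 : 0 ≤ |ψ| * E / t := by positivity
        have h3 : 0 ≤ E / t := by positivity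
        have h4 : 0 ≤ (|ψ| / t) * E := by positivity
        have h5 : 2 * (1 + |ψ| / t + 1 / t) * E = 2*E + 2*((|ψ|/t)*E) + 2*(E/t) := by ring
        have hq : |ψ| * E / t = (|ψ|/t)*E := by ring
        rw [hM, h5, hq]; linarith
      calc |α (n+1)| ≤ |(-(α n * P 0 1 + β n * P 1 1)) / ((n:ℝ)+1)|
            + |ψ * (α n * P 0 0 + β n * P 1 0) / (((n:ℝ)+1) * (2*p+(n:ℝ)+1))| := by
            rw [e0]; exact abs_add_le _ _
        _ ≤ M ^ n * E + |ψ| * (M ^ n * E) / t := by linarith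
        _ = M ^ n * (E + |ψ| * E / t) := by ring
        _ ≤ M ^ n * M := mul_le_mul_of_nonneg_left key hpn
        _ = M ^ (n+1) := (pow_succ M n).symm
    · have e1 : β (n+1) = (α n * P 0 0 + β n * P 1 0) / (2*p+(n:ℝ)+1) := by
        rw [h1]; field_simp; ring
      have key : E / t ≤ M := by
        have h3 : 0 ≤ E / t := by positivity
        have h4 : 0 ≤ (|ψ|/t)*E := by positivity
        have h5 : 2 * (1 + |ψ| / t + 1 / t) * E = 2*E + 2*((|ψ|/t)*E) + 2*(E/t) := by ring
        rw [hM, h5]; linarith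
      calc |β (n+1)| = |α n * P 0 0 + β n * P 1 0| / (2*p+(n:ℝ)+1) := by
            rw [e1, abs_div, abs_of_pos hc0]
        _ ≤ M ^ n * E / t := by
              gcongr
              all_goals first | exact abs_nonneg _ | exact hc | exact hnum1
        _ = M ^ n * (E / t) := by ring
        _ ≤ M ^ n * M := mul_le_mul_of_nonneg_left key hpn
        _ = M ^ (n+1) := (pow_succ M n).symm

lemma genF_sub_bound (c : ℕ → ℝ) (M : ℝ) (hM : 1 ≤ M) (hc : ∀ n, |c n| ≤ M ^ n)
    (w : ℂ) (hw : M * ‖w‖ ≤ 1/2) :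
    ‖genF c w - (c 0 : ℂ)‖ ≤ 2 * M * ‖w‖ := by
  have hM0 : (0:ℝ) ≤ M := by linarith
  have hx0 : (0:ℝ) ≤ M * ‖w‖ := by positivity
  have hb : ∀ n, ‖(c n : ℂ) * w ^ n‖ ≤ (M * ‖w‖) ^ n := by
    intro n
    rw [norm_mul, norm_pow, Complex.norm_real, Real.norm_eq_abs,
      mul_pow]
    exact mul_le_mul (hc n) le_rfl (by positivity) (by positivity)
  have hs : Summable (fun n => (c n : ℂ) * w ^ n) :=
    Summable.of_norm_bounded (summable_geometric_of_lt_one hx0 (by linarith)) hb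
  have hsplit : genF c w = (c 0 : ℂ) + ∑' n : ℕ, (c (n+1) : ℂ) * w ^ (n+1) := by
    rw [genF, Summable.tsum_eq_zero_add hs]; simp
  have hgeo : HasSum (fun n : ℕ => (M * ‖w‖) ^ (n+1))
      ((M * ‖w‖) * (1 - M * ‖w‖)⁻¹) := by
    have := (hasSum_geometric_of_lt_one hx0 (by linarith : M * ‖w‖ < 1)).mul_left
      (M * ‖w‖)
    simpa only [pow_succ'] using this
  have hbound : ‖∑' n : ℕ, (c (n+1) : ℂ) * w ^ (n+1)‖
      ≤ (M * ‖w‖) * (1 - M * ‖w‖)⁻¹ :=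
    tsum_of_norm_bounded hgeo (fun n => hb (n+1))
  have hinv : (1 - M * ‖w‖)⁻¹ ≤ 2 := by
    have h2 : (1:ℝ)/2 ≤ 1 - M * ‖w‖ := by linarith
    calc (1 - M * ‖w‖)⁻¹ ≤ ((1:ℝ)/2)⁻¹ := by
          apply inv_anti₀ (by norm_num) h2
      _ = 2 := by norm_num
  have heq : ‖genF c w - (c 0 : ℂ)‖ = ‖∑' n : ℕ, (c (n+1) : ℂ) * w ^ (n+1)‖ := by
    rw [hsplit]; simp
  rw [heq]
  calc ‖∑' n : ℕ, (c (n+1) : ℂ) * w ^ (n+1)‖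
      ≤ (M * ‖w‖) * (1 - M * ‖w‖)⁻¹ := hbound
    _ ≤ (M * ‖w‖) * 2 := mul_le_mul_of_nonneg_left hinv hx0
    _ = 2 * M * ‖w‖ := by ring

def lowc (p ψ a : ℝ) : ℝ :=
  if p = 0 then -(ψ * Real.log a) else ψ / (2 * p) * (a ^ (-p) - a ^ p)

lemma Dpsi_inv (p ψ a : ℝ) (ha : 0 < a) :
    (Dpsi p ψ a)⁻¹ = !![a ^ (-p), 0; lowc p ψ a, a ^ p] := by
  have hpa : (0:ℝ) < a ^ p := Real.rpow_pos_of_pos ha p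
  have hmul : a ^ p * a ^ (-p) = 1 := by
    rw [← Real.rpow_add ha]; simp
  apply inv_eq_right_inv
  by_cases hp : p = 0
  · subst hp
    simp only [Dpsi, lowc, if_pos rfl]
    ext i j
    fin_cases i <;> fin_cases j <;>
      simp [Matrix.mul_apply, Fin.sum_univ_two, Real.rpow_zero, neg_zero] <;> ring
  · simp only [Dpsi, lowc, if_neg hp]
    ext i j
    fin_cases i <;> fin_cases j <;>
      simp [Matrix.mul_apply, Fin.sum_univ_two] <;>
      first | linear_combination hmul | ring

lemma rowAB_apply (p ψ : ℝ) (α β : ℕ → ℝ) (a : ℝ) (ha : 0 < a) (z : ℂ) :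
    rowAB p ψ α β a z 0 0
        = genF α ((a:ℂ) * z) + ((a ^ p * lowc p ψ a : ℝ) : ℂ) * genF β ((a:ℂ) * z)
    ∧ rowAB p ψ α β a z 0 1 = ((a ^ p * a ^ p : ℝ) : ℂ) * genF β ((a:ℂ) * z) := by
  have hmul : a ^ p * a ^ (-p) = 1 := by rw [← Real.rpow_add ha]; simp
  have hmulC : ((a ^ p : ℝ) : ℂ) * ((a ^ (-p) : ℝ) : ℂ) = 1 := by
    rw [← Complex.ofReal_mul, hmul, Complex.ofReal_one]
  constructor <;>
  · rw [rowAB, Dpsi_inv p ψ a ha]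
    simp [Matrix.mul_apply, Fin.sum_univ_two, Matrix.map_apply]
    push_cast
    first
      | linear_combination (genF α ((a:ℂ) * z)) * hmulC
      | ring

lemma rpow_lim (q : ℝ) (hq : 0 < q) :
    Tendsto (fun a : ℝ => a ^ q) (nhdsWithin 0 (Set.Ioi 0)) (nhds 0) := by
  have h := (Real.continuousAt_rpow_const 0 q (Or.inr hq.le)).tendsto
  rw [Real.zero_rpow hq.ne'] at h
  exact h.mono_left nhdsWithin_le_nhds

lemma id_lim : Tendsto (fun a : ℝ => a) (nhdsWithin 0 (Set.Ioi 0)) (nhds 0) :=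
  tendsto_id.mono_left nhdsWithin_le_nhds

lemma lim_h (p : ℝ) (hp : -(1/2 : ℝ) < p) :
    Tendsto (fun a : ℝ => a * (a ^ p * a ^ p)) (nhdsWithin 0 (Set.Ioi 0)) (nhds 0) := by
  have heq : ∀ᶠ a : ℝ in nhdsWithin 0 (Set.Ioi 0),
      a ^ (2 * p + 1) = a * (a ^ p * a ^ p) := by
    filter_upwards [self_mem_nhdsWithin] with a (ha : a ∈ Set.Ioi 0)
    have ha0 : (0:ℝ) < a := ha
    rw [show (2*p+1 : ℝ) = p + (p + 1) by ring, Real.rpow_add ha0, Real.rpow_add ha0,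
      Real.rpow_one]
    ring
  exact (rpow_lim (2 * p + 1) (by linarith)).congr' heq

lemma lim_g (p ψ : ℝ) (hp : -(1/2 : ℝ) < p) :
    Tendsto (fun a : ℝ => a * |a ^ p * lowc p ψ a|) (nhdsWithin 0 (Set.Ioi 0)) (nhds 0) := by
  by_cases hp0 : p = 0
  · subst hp0
    have h1 : Tendsto (fun a : ℝ => |ψ| * |Real.log a * a|)
        (nhdsWithin 0 (Set.Ioi 0)) (nhds 0) := by
      have h := tendsto_log_mul_rpow_nhdsGT_zero one_pos
      simp only [Real.rpow_one] at h
      have := h.abs.const_mul |ψ|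
      simpa using this
    apply h1.congr'
    filter_upwards [self_mem_nhdsWithin] with a (ha : a ∈ Set.Ioi 0)
    have ha0 : (0:ℝ) < a := ha
    simp only [lowc, Real.rpow_zero, one_mul]
    rw [if_true, abs_neg, abs_mul ψ, abs_mul (Real.log a) a, abs_of_pos ha0]
    ring
  · have hkey : Tendsto (fun a : ℝ => |ψ / (2*p) * (a - a ^ (2*p+1))|)
        (nhdsWithin 0 (Set.Ioi 0)) (nhds 0) := by
      have h := ((id_lim.sub (rpow_lim (2*p+1) (by linarith))).const_mul (ψ / (2*p))).abs
      simpa using h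
    apply hkey.congr'
    filter_upwards [self_mem_nhdsWithin] with a (ha : a ∈ Set.Ioi 0)
    have ha0 : (0:ℝ) < a := ha
    have hmul : a ^ p * a ^ (-p) = 1 := by rw [← Real.rpow_add ha0]; simp
    have h2 : a * (a ^ p * a ^ p) = a ^ (2*p+1) := by
      rw [show (2*p+1 : ℝ) = p + (p + 1) by ring, Real.rpow_add ha0, Real.rpow_add ha0,
        Real.rpow_one]
      ring
    have habs : a * |a ^ p * lowc p ψ a| = |a * (a ^ p * lowc p ψ a)| := by
      rw [abs_mul a (a ^ p * lowc p ψ a), abs_of_pos ha0]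
    rw [habs]
    congr 1
    simp only [lowc, if_neg hp0]
    linear_combination (-(ψ/(2*p))*a) * hmul + (ψ/(2*p)) * h2

/-- as a → 0⁺, the rescaled pair (A(a,·),B(a,·)) converges to (1,0)
locally uniformly on ℂ. -/
theorem statement2 (p : ℝ) (hp : -(1/2 : ℝ) < p)
    (P : Matrix (Fin 2) (Fin 2) ℝ) (ψ : ℝ) (α β : ℕ → ℝ)
    (hrec : SatRec p P ψ α β) :
    ∀ K : Set ℂ, IsCompact K →
      TendstoUniformlyOn (fun (a : ℝ) (z : ℂ) => (rowAB p ψ α β a z) 0 0)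
        (fun _ => 1) (nhdsWithin 0 (Set.Ioi 0)) K ∧
      TendstoUniformlyOn (fun (a : ℝ) (z : ℂ) => (rowAB p ψ α β a z) 0 1)
        (fun _ => 0) (nhdsWithin 0 (Set.Ioi 0)) K := by
  intro K hK
  obtain ⟨M, hM1, hcb⟩ := coeff_bound p hp P ψ α β hrec
  have hM0 : (0:ℝ) ≤ M := le_trans zero_le_one hM1
  obtain ⟨R0, hR0⟩ := hK.isBounded.subset_closedBall 0
  obtain ⟨R, hRR0, hR1⟩ : ∃ R : ℝ, R0 ≤ R ∧ 1 ≤ R := ⟨max R0 1, le_max_left _ _, le_max_right _ _⟩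
  have hR0' : (0:ℝ) < R := lt_of_lt_of_le one_pos hR1
  have hzR : ∀ z ∈ K, ‖z‖ ≤ R := by
    intro z hz
    have := hR0 hz
    rw [Metric.mem_closedBall, dist_zero_right] at this
    linarith
  -- eventual smallness of M * (a * R)
  have hevsmall : ∀ᶠ a in nhdsWithin (0:ℝ) (Set.Ioi 0), M * (a * R) ≤ 1/2 := by
    have h : Tendsto (fun a : ℝ => M * (a * R)) (nhdsWithin 0 (Set.Ioi 0)) (nhds 0) := by
      have := (id_lim.const_mul (M * R))
      simp only [mul_zero] at this
      apply this.congr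
      intro a; ring
    filter_upwards [h (Iio_mem_nhds (by norm_num : (0:ℝ) < 1/2))] with a ha
    exact le_of_lt ha
  constructor
  · rw [Metric.tendstoUniformlyOn_iff]
    intro ε hε
    have hT : Tendsto (fun a : ℝ => 2*M*R*a + (a * |a^p * lowc p ψ a|) * (2*M*R))
        (nhdsWithin 0 (Set.Ioi 0)) (nhds 0) := by
      have := (id_lim.const_mul (2*M*R)).add ((lim_g p ψ hp).mul_const (2*M*R))
      simpa using this
    filter_upwards [hT (Iio_mem_nhds hε), hevsmall, self_mem_nhdsWithin] with a h1 h2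
      (ha : a ∈ Set.Ioi 0)
    intro z hz
    have ha0 : (0:ℝ) < a := ha
    obtain ⟨e0, e1⟩ := rowAB_apply p ψ α β a ha0 z
    have habsw : ‖(a:ℂ) * z‖ ≤ a * R := by
      rw [norm_mul, Complex.norm_real, Real.norm_eq_abs, abs_of_pos ha0]
      exact mul_le_mul_of_nonneg_left (hzR z hz) ha0.le
    have hw2 : M * ‖(a:ℂ) * z‖ ≤ 1/2 :=
      le_trans (mul_le_mul_of_nonneg_left habsw hM0) h2
    have hA := genF_sub_bound α M hM1 (fun n => (hcb n).1) ((a:ℂ) * z) hw2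
    rw [hrec.1, Complex.ofReal_one] at hA
    have hB := genF_sub_bound β M hM1 (fun n => (hcb n).2) ((a:ℂ) * z) hw2
    rw [hrec.2.1, Complex.ofReal_zero, sub_zero] at hB
    have s1 : ‖genF α ((a:ℂ) * z) - 1‖ ≤ 2*M*(a*R) := by
      refine le_trans hA ?_
      have := mul_le_mul_of_nonneg_left habsw (by positivity : (0:ℝ) ≤ 2*M)
      linarith
    have s2 : ‖genF β ((a:ℂ) * z)‖ ≤ 2*M*(a*R) := by
      refine le_trans hB ?_
      have := mul_le_mul_of_nonneg_left habsw (by positivity : (0:ℝ) ≤ 2*M)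
      linarith
    rw [Complex.dist_eq, norm_sub_rev]
    calc ‖rowAB p ψ α β a z 0 0 - 1‖
        = ‖(genF α ((a:ℂ) * z) - 1)
            + ((a ^ p * lowc p ψ a : ℝ) : ℂ) * genF β ((a:ℂ) * z)‖ := by
          congr 1; rw [e0]; ring
      _ ≤ ‖genF α ((a:ℂ) * z) - 1‖
            + ‖((a ^ p * lowc p ψ a : ℝ) : ℂ) * genF β ((a:ℂ) * z)‖ :=
          norm_add_le _ _
      _ = ‖genF α ((a:ℂ) * z) - 1‖
            + |a ^ p * lowc p ψ a| * ‖genF β ((a:ℂ) * z)‖ := by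
          rw [norm_mul, Complex.norm_real, Real.norm_eq_abs]
      _ ≤ 2*M*(a*R) + |a ^ p * lowc p ψ a| * (2*M*(a*R)) := by
          refine add_le_add s1 (mul_le_mul_of_nonneg_left s2 (abs_nonneg _))
      _ < ε := by
          rw [Set.mem_preimage, Set.mem_Iio] at h1
          nlinarith [h1]
  · rw [Metric.tendstoUniformlyOn_iff]
    intro ε hε
    have hT : Tendsto (fun a : ℝ => (a * (a^p * a^p)) * (2*M*R))
        (nhdsWithin 0 (Set.Ioi 0)) (nhds 0) := by
      have := (lim_h p hp).mul_const (2*M*R)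
      simpa using this
    filter_upwards [hT (Iio_mem_nhds hε), hevsmall, self_mem_nhdsWithin] with a h1 h2
      (ha : a ∈ Set.Ioi 0)
    intro z hz
    have ha0 : (0:ℝ) < a := ha
    obtain ⟨e0, e1⟩ := rowAB_apply p ψ α β a ha0 z
    have habsw : ‖(a:ℂ) * z‖ ≤ a * R := by
      rw [norm_mul, Complex.norm_real, Real.norm_eq_abs, abs_of_pos ha0]
      exact mul_le_mul_of_nonneg_left (hzR z hz) ha0.le
    have hw2 : M * ‖(a:ℂ) * z‖ ≤ 1/2 :=
      le_trans (mul_le_mul_of_nonneg_left habsw hM0) h2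
    have hB := genF_sub_bound β M hM1 (fun n => (hcb n).2) ((a:ℂ) * z) hw2
    rw [hrec.2.1, Complex.ofReal_zero, sub_zero] at hB
    have s2 : ‖genF β ((a:ℂ) * z)‖ ≤ 2*M*(a*R) := by
      refine le_trans hB ?_
      have := mul_le_mul_of_nonneg_left habsw (by positivity : (0:ℝ) ≤ 2*M)
      linarith
    have hpp : (0:ℝ) ≤ a ^ p * a ^ p := by positivity
    rw [Complex.dist_eq]
    calc ‖0 - rowAB p ψ α β a z 0 1‖
        = (a ^ p * a ^ p) * ‖genF β ((a:ℂ) * z)‖ := by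
          rw [zero_sub, norm_neg, e1, norm_mul, Complex.norm_real, Real.norm_eq_abs, abs_of_nonneg hpp]
      _ ≤ (a ^ p * a ^ p) * (2*M*(a*R)) := mul_le_mul_of_nonneg_left s2 hpp
      _ < ε := by
          rw [Set.mem_preimage, Set.mem_Iio] at h1
          nlinarith [h1]
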